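/- Let P be a poset, 𝓜, 𝓝 minimal subset selections on P, and y, z ∈ P. Then y ◁_𝓜𝓝 z if and only if for every net (x_i)_{i∈I} in P, if (x_i) 𝓜𝓝-converges to y then x_i ∈ ↓z eventually. -/

import Mathlib

universe u

/-- A directed preordered index for a net. -/
structure IsDirNet {I : Type u} (r : I → I → Prop) : Prop where
  refl : ∀ i, r i i
  trans : ∀ {i j k : I}, r i j → r j k → r i k
  nonempty : Nonempty I
  directed : ∀ i j, ∃ k, r i k ∧ r j k

/-- A minimal subset selection on a poset `P`. -/
def MinSel {P : Type u} [PartialOrder P] (M : Set (Set P)) : Prop :=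
  (∅ : Set P) ∉ M ∧ ∀ x : P, {x} ∈ M

/-- The net `f : I → P` `𝓜𝓝`-converges to `x`. -/
def MNConv {P : Type u} [PartialOrder P] (M N : Set (Set P))
    {I : Type u} (r : I → I → Prop) (f : I → P) (x : P) : Prop :=
  ∃ A S : Set P, A ∈ M ∧ S ∈ N ∧ IsLUB A x ∧ IsGLB S x ∧
    ∀ a ∈ A, ∀ s ∈ S, ∃ i₀, ∀ i, r i₀ i → a ≤ f i ∧ f i ≤ s

/-- The topology `τ_𝓜𝓝` induced by `𝓜𝓝`-convergence. -/
def mnTop {P : Type u} [PartialOrder P] (M N : Set (Set P)) : Set (Set P) :=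
  {U | ∀ (I : Type u) (r : I → I → Prop) (f : I → P) (x : P),
      IsDirNet r → MNConv M N r f x → x ∈ U → ∃ i₀, ∀ i, r i₀ i → f i ∈ U}

/-- The `𝓜𝓝`-convergence structure is topological. -/
def MNTopological {P : Type u} [PartialOrder P] (M N : Set (Set P)) : Prop :=
  ∀ (I : Type u) (r : I → I → Prop) (f : I → P) (x : P), IsDirNet r →
    (∀ U ∈ mnTop M N, x ∈ U → ∃ i₀, ∀ i, r i₀ i → f i ∈ U) →
    MNConv M N r f x

/-- The relation `x ≪_𝓜𝓝 y`. -/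
def wbMN {P : Type u} [PartialOrder P] (M N : Set (Set P)) (x y : P) : Prop :=
  ∀ A S : Set P, A ∈ M → S ∈ N → IsLUB A y → IsGLB S y →
    ∃ B T : Set P, B.Nonempty ∧ B.Finite ∧ B ⊆ A ∧ T.Nonempty ∧ T.Finite ∧ T ⊆ S ∧
      upperBounds B ∩ lowerBounds T ⊆ Set.Ici x

/-- The relation `y ◁_𝓜𝓝 z`. -/
def triMN {P : Type u} [PartialOrder P] (M N : Set (Set P)) (y z : P) : Prop :=
  ∀ A S : Set P, A ∈ M → S ∈ N → IsLUB A y → IsGLB S y →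
    ∃ B T : Set P, B.Nonempty ∧ B.Finite ∧ B ⊆ A ∧ T.Nonempty ∧ T.Finite ∧ T ⊆ S ∧
      upperBounds B ∩ lowerBounds T ⊆ Set.Iic z

/-- `𝓜𝓝`-continuity of the poset `P`. -/
def MNCont {P : Type u} [PartialOrder P] (M N : Set (Set P)) : Prop :=
  ∀ x y : P,
    (∃ A S : Set P, A ∈ M ∧ S ∈ N ∧ A ⊆ {w | wbMN M N w x} ∧
      S ⊆ {w | triMN M N x w} ∧ IsLUB A x ∧ IsGLB S x) ∧
    ({w | wbMN M N x w} ∩ {w | triMN M N w y}) ∈ mnTop M N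

lemma ev_and {I : Type u} {r : I → I → Prop} (h : IsDirNet r) {p q : I → Prop}
    (hp : ∃ i₀, ∀ i, r i₀ i → p i) (hq : ∃ i₀, ∀ i, r i₀ i → q i) :
    ∃ i₀, ∀ i, r i₀ i → p i ∧ q i := by
  obtain ⟨i₁, h₁⟩ := hp
  obtain ⟨i₂, h₂⟩ := hq
  obtain ⟨k, hk1, hk2⟩ := h.directed i₁ i₂
  exact ⟨k, fun i hi => ⟨h₁ i (h.trans hk1 hi), h₂ i (h.trans hk2 hi)⟩⟩

lemma ev_forall {I α : Type u} {r : I → I → Prop} (h : IsDirNet r) {B : Set α}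
    (hB : B.Finite) (p : α → I → Prop)
    (hb : ∀ b ∈ B, ∃ i₀, ∀ i, r i₀ i → p b i) :
    ∃ i₀, ∀ i, r i₀ i → ∀ b ∈ B, p b i := by
  refine Set.Finite.induction_on
    (motive := fun B _ => (∀ b ∈ B, ∃ i₀, ∀ i, r i₀ i → p b i) →
      ∃ i₀, ∀ i, r i₀ i → ∀ b ∈ B, p b i) B hB ?_ ?_ hb
  · intro _
    obtain ⟨i⟩ := h.nonempty
    exact ⟨i, fun i _ b hbm => absurd hbm (Set.notMem_empty b)⟩
  · intro a B' _ _ ih hb'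
    obtain ⟨i₀, h₀⟩ := ev_and h (hb' a (Set.mem_insert a B'))
      (ih fun b hbB => hb' b (Set.mem_insert_of_mem a hbB))
    exact ⟨i₀, fun i hi b hbmem => by
      rcases Set.mem_insert_iff.mp hbmem with rfl | hbB
      · exact (h₀ i hi).1
      · exact (h₀ i hi).2 b hbB⟩

/-- Net characterisation of `y ◁_𝓜𝓝 z`. -/
theorem stmt_12 {P : Type u} [PartialOrder P] (M N : Set (Set P))
    (hM : MinSel M) (hN : MinSel N) (y z : P) :
    triMN M N y z ↔
      ∀ (I : Type u) (r : I → I → Prop) (f : I → P), IsDirNet r →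
        MNConv M N r f y → ∃ i₀, ∀ i, r i₀ i → f i ≤ z := by
  constructor
  · intro htri I r f hdir hconv
    obtain ⟨A, S, hA, hS, hlub, hglb, hev⟩ := hconv
    obtain ⟨B, T, hBne, hBfin, hBA, hTne, hTfin, hTS, hsub⟩ :=
      htri A S hA hS hlub hglb
    have hB : ∃ i₀, ∀ i, r i₀ i → ∀ a ∈ B, a ≤ f i := by
      refine ev_forall hdir hBfin _ fun a haB => ?_
      obtain ⟨s, hsT⟩ := hTne
      obtain ⟨i₀, h₀⟩ := hev a (hBA haB) s (hTS hsT)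
      exact ⟨i₀, fun i hi => (h₀ i hi).1⟩
    have hT : ∃ i₀, ∀ i, r i₀ i → ∀ s ∈ T, f i ≤ s := by
      refine ev_forall hdir hTfin _ fun s hsT => ?_
      obtain ⟨a, haB⟩ := hBne
      obtain ⟨i₀, h₀⟩ := hev a (hBA haB) s (hTS hsT)
      exact ⟨i₀, fun i hi => (h₀ i hi).2⟩
    obtain ⟨i₀, h₀⟩ := ev_and hdir hB hT
    refine ⟨i₀, fun i hi => hsub ⟨fun a haB => (h₀ i hi).1 a haB,
      fun s hsT => (h₀ i hi).2 s hsT⟩⟩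
  · intro hnet
    by_contra htri
    simp only [triMN, not_forall] at htri
    obtain ⟨A, S, hA, hS, hlub, hglb, hbad⟩ := htri
    push_neg at hbad
    -- hbad : ∀ B T, B.Nonempty → B.Finite → B ⊆ A → T.Nonempty → T.Finite → T ⊆ S →
    --   ¬ (upperBounds B ∩ lowerBounds T ⊆ Set.Iic z)
    have hAne : A.Nonempty := Set.nonempty_iff_ne_empty.mpr (fun h => hM.1 (h ▸ hA))
    have hSne : S.Nonempty := Set.nonempty_iff_ne_empty.mpr (fun h => hN.1 (h ▸ hS))
    set I : Type u := {p : Set P × Set P //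
      p.1.Nonempty ∧ p.1.Finite ∧ p.1 ⊆ A ∧ p.2.Nonempty ∧ p.2.Finite ∧ p.2 ⊆ S} with hI
    set r : I → I → Prop := fun p q => p.1.1 ⊆ q.1.1 ∧ p.1.2 ⊆ q.1.2 with hr
    have hdir : IsDirNet r := by
      refine ⟨fun i => ⟨subset_rfl, subset_rfl⟩,
        fun h1 h2 => ⟨h1.1.trans h2.1, h1.2.trans h2.2⟩, ?_, ?_⟩
      · obtain ⟨a, ha⟩ := hAne
        obtain ⟨s, hs⟩ := hSne
        exact ⟨⟨({a}, {s}), Set.singleton_nonempty a, Set.finite_singleton a,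
          Set.singleton_subset_iff.mpr ha, Set.singleton_nonempty s,
          Set.finite_singleton s, Set.singleton_subset_iff.mpr hs⟩⟩
      · rintro ⟨⟨B, T⟩, hB1, hB2, hB3, hT1, hT2, hT3⟩ ⟨⟨B', T'⟩, hB1', hB2', hB3', hT1', hT2', hT3'⟩
        exact ⟨⟨(B ∪ B', T ∪ T'), hB1.mono Set.subset_union_left,
          hB2.union hB2', Set.union_subset hB3 hB3',
          hT1.mono Set.subset_union_left, hT2.union hT2',
          Set.union_subset hT3 hT3'⟩,
          ⟨Set.subset_union_left, Set.subset_union_left⟩,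
          ⟨Set.subset_union_right, Set.subset_union_right⟩⟩
    have hchoice : ∀ i : I, ∃ x : P,
        x ∈ upperBounds i.1.1 ∩ lowerBounds i.1.2 ∧ ¬ x ≤ z := by
      rintro ⟨⟨B, T⟩, hB1, hB2, hB3, hT1, hT2, hT3⟩
      have := hbad B T hB1 hB2 hB3 hT1 hT2 hT3
      rw [Set.not_subset] at this
      obtain ⟨x, hx1, hx2⟩ := this
      exact ⟨x, hx1, hx2⟩
    choose f hf1 hf2 using hchoice
    have hconv : MNConv M N r f y := by
      refine ⟨A, S, hA, hS, hlub, hglb, fun a ha s hs => ?_⟩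
      refine ⟨⟨({a}, {s}), Set.singleton_nonempty a, Set.finite_singleton a,
        Set.singleton_subset_iff.mpr ha, Set.singleton_nonempty s,
        Set.finite_singleton s, Set.singleton_subset_iff.mpr hs⟩, fun i hi => ?_⟩
      exact ⟨(hf1 i).1 (hi.1 rfl), (hf1 i).2 (hi.2 rfl)⟩
    obtain ⟨i₀, h₀⟩ := hnet I r f hdir hconv
    exact hf2 i₀ (h₀ i₀ ⟨subset_rfl, subset_rfl⟩)
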